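/- Let n ≥ 1 and let F_1, …, F_n : ℝ^d → ℝ^d be arbitrary operators with average F = (1/n)∑_{i=1}^n F_i. Then, with no further assumptions on the F_i, the SARAH inner-loop trajectory satisfies 𝔼[‖F(z^K) − v^K‖²] ≤ ∑_{k=1}^K 𝔼[‖v^k − v^{k−1}‖²]. -/

import Mathlib

open Finset

noncomputable section

/-- An operator `G : ℝ^d → ℝ^d` is `ℓ`-cocoercive:
`‖G(u) - G(v)‖² ≤ ℓ ⟨G(u) - G(v), u - v⟩` for all `u, v`. -/
def Cocoercive {d : ℕ} (ℓ : ℝ)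
    (G : EuclideanSpace ℝ (Fin d) → EuclideanSpace ℝ (Fin d)) : Prop :=
  ∀ u v : EuclideanSpace ℝ (Fin d),
    ‖G u - G v‖ ^ 2 ≤ ℓ * (inner ℝ (G u - G v) (u - v) : ℝ)

/-- An operator `G : ℝ^d → ℝ^d` is `μ`-strongly monotone:
`⟨G(u) - G(v), u - v⟩ ≥ μ ‖u - v‖²` for all `u, v`. -/
def StronglyMonotone {d : ℕ} (μ : ℝ)
    (G : EuclideanSpace ℝ (Fin d) → EuclideanSpace ℝ (Fin d)) : Prop :=
  ∀ u v : EuclideanSpace ℝ (Fin d),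
    μ * ‖u - v‖ ^ 2 ≤ (inner ℝ (G u - G v) (u - v) : ℝ)

/-- The average operator `F = (1/n) ∑_{i=1}^n F_i`. -/
def opAvg {d n : ℕ} (F : Fin n → EuclideanSpace ℝ (Fin d) → EuclideanSpace ℝ (Fin d)) :
    EuclideanSpace ℝ (Fin d) → EuclideanSpace ℝ (Fin d) :=
  fun z => (n : ℝ)⁻¹ • ∑ i, F i z

/-- One step of the SARAH recursion: from `(z, v)` and index `i`, go to `(z', v')`
with `z' = z - γ v` and `v' = F_i(z') - F_i(z) + v`. -/
def sarahStep {d n : ℕ} (γ : ℝ)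
    (F : Fin n → EuclideanSpace ℝ (Fin d) → EuclideanSpace ℝ (Fin d)) (i : Fin n)
    (p : EuclideanSpace ℝ (Fin d) × EuclideanSpace ℝ (Fin d)) :
    EuclideanSpace ℝ (Fin d) × EuclideanSpace ℝ (Fin d) :=
  (p.1 - γ • p.2, F i (p.1 - γ • p.2) - F i p.1 + p.2)

/-- Run SARAH steps along a list of indices. -/
def sarahRun {d n : ℕ} (γ : ℝ)
    (F : Fin n → EuclideanSpace ℝ (Fin d) → EuclideanSpace ℝ (Fin d)) :
    EuclideanSpace ℝ (Fin d) × EuclideanSpace ℝ (Fin d) → List (Fin n) →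
      EuclideanSpace ℝ (Fin d) × EuclideanSpace ℝ (Fin d)
  | p, [] => p
  | p, i :: l => sarahRun γ F (sarahStep γ F i p) l

/-- The SARAH inner-loop trajectory `(z^k, v^k)` started at `z^0 = z0` with
`v^0 = F(z^0)`, for the index sequence `j : Fin K → Fin n` (so `i_k = j (k-1)`):
`sarahTraj γ F z0 j k = (z^k, v^k)` is obtained by performing the SARAH steps
with the first `k` indices `i_1, …, i_k`. -/
def sarahTraj {d n K : ℕ} (γ : ℝ)
    (F : Fin n → EuclideanSpace ℝ (Fin d) → EuclideanSpace ℝ (Fin d))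
    (z0 : EuclideanSpace ℝ (Fin d)) (j : Fin K → Fin n) (k : ℕ) :
    EuclideanSpace ℝ (Fin d) × EuclideanSpace ℝ (Fin d) :=
  sarahRun γ F (z0, opAvg F z0) ((List.ofFn j).take k)


section Aux

open Finset

/-- Bias–variance decomposition. -/
lemma sarah_bias_var {E : Type*} [NormedAddCommGroup E] [InnerProductSpace ℝ E] {n : ℕ}
    (X : Fin n → E) (m c : E) (hm : (n : ℝ) • m = ∑ i, X i) :
    ∑ i, ‖X i - c‖ ^ 2 = (∑ i, ‖X i - m‖ ^ 2) + n * ‖m - c‖ ^ 2 := by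
  have hexp : ∀ i, ‖X i - c‖ ^ 2
      = ‖X i - m‖ ^ 2 + 2 * (inner ℝ (X i - m) (m - c) : ℝ) + ‖m - c‖ ^ 2 := by
    intro i
    have h := norm_add_sq_real (X i - m) (m - c)
    rw [sub_add_sub_cancel] at h
    exact h
  have hzero : ∑ i, (inner ℝ (X i - m) (m - c) : ℝ) = 0 := by
    rw [← sum_inner]
    have hs : ∑ i, (X i - m) = 0 := by
      rw [Finset.sum_sub_distrib, ← hm, Finset.sum_const, Finset.card_univ, Fintype.card_fin,
        Nat.cast_smul_eq_nsmul, sub_self]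
    rw [hs, inner_zero_left]
  calc ∑ i, ‖X i - c‖ ^ 2
      = ∑ i, (‖X i - m‖ ^ 2 + 2 * (inner ℝ (X i - m) (m - c) : ℝ) + ‖m - c‖ ^ 2) :=
        Finset.sum_congr rfl fun i _ => hexp i
    _ = (∑ i, ‖X i - m‖ ^ 2) + 2 * (∑ i, (inner ℝ (X i - m) (m - c) : ℝ))
        + n * ‖m - c‖ ^ 2 := by
        rw [Finset.sum_add_distrib, Finset.sum_add_distrib, ← Finset.mul_sum,
          Finset.sum_const, Finset.card_univ, Fintype.card_fin, nsmul_eq_mul]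
    _ = (∑ i, ‖X i - m‖ ^ 2) + n * ‖m - c‖ ^ 2 := by rw [hzero]; ring

/-- One-step conditional bound. -/
lemma sarah_step_bound {d n : ℕ} (hn : 1 ≤ n) (γ : ℝ)
    (F : Fin n → EuclideanSpace ℝ (Fin d) → EuclideanSpace ℝ (Fin d))
    (p : EuclideanSpace ℝ (Fin d) × EuclideanSpace ℝ (Fin d)) :
    ∑ i, ‖opAvg F (sarahStep γ F i p).1 - (sarahStep γ F i p).2‖ ^ 2
      ≤ n * ‖opAvg F p.1 - p.2‖ ^ 2 + ∑ i, ‖(sarahStep γ F i p).2 - p.2‖ ^ 2 := by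
  have hn0 : ((n : ℝ)) ≠ 0 := by positivity
  set z' := p.1 - γ • p.2 with hz'
  set X : Fin n → EuclideanSpace ℝ (Fin d) := fun i => F i z' - F i p.1 + p.2 with hX
  set m := opAvg F z' - opAvg F p.1 + p.2 with hmdef
  have hm : (n : ℝ) • m = ∑ i, X i := by
    simp only [hmdef, hX, opAvg, smul_add, smul_sub, smul_smul,
      mul_inv_cancel₀ hn0, one_smul]
    rw [Finset.sum_add_distrib, Finset.sum_sub_distrib, Finset.sum_const,
      Finset.card_univ, Fintype.card_fin, ← Nat.cast_smul_eq_nsmul ℝ]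
  have h1 := sarah_bias_var X m (opAvg F z') hm
  have h2 := sarah_bias_var X m p.2 hm
  have e1 : ∑ i, ‖opAvg F (sarahStep γ F i p).1 - (sarahStep γ F i p).2‖ ^ 2
      = ∑ i, ‖X i - opAvg F z'‖ ^ 2 := by
    refine Finset.sum_congr rfl fun i _ => ?_
    rw [show opAvg F (sarahStep γ F i p).1 - (sarahStep γ F i p).2
        = -(X i - opAvg F z') by simp only [sarahStep, hX, ← hz']; abel, norm_neg]
  have e2 : ∑ i, ‖(sarahStep γ F i p).2 - p.2‖ ^ 2 = ∑ i, ‖X i - p.2‖ ^ 2 := by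
    refine Finset.sum_congr rfl fun i _ => ?_
    simp only [sarahStep, hX, ← hz']
  have e3 : ‖m - opAvg F z'‖ = ‖opAvg F p.1 - p.2‖ := by
    rw [show m - opAvg F z' = -(opAvg F p.1 - p.2) by rw [hmdef]; abel, norm_neg]
  rw [e1, e2, h1, e3]
  have hnn : (0:ℝ) ≤ n * ‖m - p.2‖ ^ 2 := by positivity
  linarith [h2]

lemma sarahRun_append {d n : ℕ} (γ : ℝ)
    (F : Fin n → EuclideanSpace ℝ (Fin d) → EuclideanSpace ℝ (Fin d))
    (p : EuclideanSpace ℝ (Fin d) × EuclideanSpace ℝ (Fin d)) (l : List (Fin n)) (i : Fin n) :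
    sarahRun γ F p (l ++ [i]) = sarahStep γ F i (sarahRun γ F p l) := by
  induction l generalizing p with
  | nil => rfl
  | cons a l ih =>
    simp only [List.cons_append, sarahRun]
    exact ih _

lemma sarahTraj_succ {d n K : ℕ} (γ : ℝ)
    (F : Fin n → EuclideanSpace ℝ (Fin d) → EuclideanSpace ℝ (Fin d))
    (z0 : EuclideanSpace ℝ (Fin d)) (j : Fin K → Fin n) {k : ℕ} (hk : k < K) :
    sarahTraj γ F z0 j (k + 1) = sarahStep γ F (j ⟨k, hk⟩) (sarahTraj γ F z0 j k) := by
  unfold sarahTraj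
  rw [List.take_succ]
  have hlen : k < (List.ofFn j).length := by simpa using hk
  rw [List.getElem?_eq_getElem hlen]
  simp [sarahRun_append]

lemma sarahTraj_update {d n K : ℕ} (γ : ℝ)
    (F : Fin n → EuclideanSpace ℝ (Fin d) → EuclideanSpace ℝ (Fin d))
    (z0 : EuclideanSpace ℝ (Fin d)) (j : Fin K → Fin n) (kh : Fin K) (a : Fin n) :
    sarahTraj γ F z0 (Function.update j kh a) kh.val = sarahTraj γ F z0 j kh.val := by
  unfold sarahTraj
  congr 1
  apply List.ext_getElem (by simp)
  intro i h1 h2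
  have hiK : i < K := by
    have := h1
    simp only [List.length_take, List.length_ofFn] at this
    omega
  have hikh : i < kh.val := by
    have := h1
    simp only [List.length_take, List.length_ofFn] at this
    omega
  rw [List.getElem_take, List.getElem_take, List.getElem_ofFn, List.getElem_ofFn]
  have hne : (⟨i, hiK⟩ : Fin K) ≠ kh := by
    simp only [ne_eq, Fin.ext_iff]
    omega
  exact Function.update_of_ne hne a j

lemma sarah_sum_group {α : Type*} [Fintype α] [DecidableEq α] {K : ℕ} (kh : Fin K)
    (G : (Fin K → α) → α → ℝ)
    (hG : ∀ j a i, G (Function.update j kh a) i = G j i) :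
    ∑ j : Fin K → α, ∑ i, G j i = (Fintype.card α) * ∑ j : Fin K → α, G j (j kh) := by
  classical
  set e := (Equiv.funSplitAt kh α).symm with he
  have hupd : ∀ (a b : α) (r : { x // x ≠ kh } → α),
      e (a, r) = Function.update (e (b, r)) kh a := by
    intro a b r
    funext x
    simp only [he, Equiv.funSplitAt_symm_apply, Function.update]
    split_ifs with h
    · subst h; rfl
    · rfl
  have hval : ∀ (a : α) (r : { x // x ≠ kh } → α), e (a, r) kh = a := by
    intro a r
    simp [he, Equiv.funSplitAt_symm_apply]
  have hind : ∀ (a b : α) (r : { x // x ≠ kh } → α) (i : α),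
      G (e (a, r)) i = G (e (b, r)) i := by
    intro a b r i
    rw [hupd a b r, hG]
  rw [← Equiv.sum_comp e (fun j => ∑ i, G j i), ← Equiv.sum_comp e (fun j => G j (j kh)),
    Fintype.sum_prod_type, Fintype.sum_prod_type]
  have lhs_eq : ∀ a : α, (∑ r, ∑ i, G (e (a, r)) i) = ∑ r, ∑ i, G (e (i, r)) i := by
    intro a
    refine Finset.sum_congr rfl fun r _ => Finset.sum_congr rfl fun i _ => hind a i r i
  have rhs_eq : ∀ a : α, (∑ r, G (e (a, r)) (e (a, r) kh)) = ∑ r, G (e (a, r)) a := by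
    intro a
    refine Finset.sum_congr rfl fun r _ => by rw [hval]
  calc ∑ a, ∑ r, ∑ i, G (e (a, r)) i
      = ∑ a : α, ∑ r, ∑ i, G (e (i, r)) i := Finset.sum_congr rfl fun a _ => lhs_eq a
    _ = (Fintype.card α) * ∑ r, ∑ i, G (e (i, r)) i := by
        rw [Finset.sum_const, Finset.card_univ, nsmul_eq_mul]
    _ = (Fintype.card α) * ∑ i, ∑ r, G (e (i, r)) i := by rw [Finset.sum_comm]
    _ = (Fintype.card α) * ∑ a, ∑ r, G (e (a, r)) (e (a, r) kh) := by
        congr 1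
        exact Finset.sum_congr rfl fun a _ => (rhs_eq a).symm

end Aux

/-- **Telescoping bound for the SARAH residual.** For arbitrary operators `F_i` with
average `F`, the SARAH inner loop satisfies
`𝔼[‖F(z^K) - v^K‖²] ≤ ∑_{k=1}^K 𝔼[‖v^k - v^{k-1}‖²]`, where the expectation is the
uniform average over all `n^K` index sequences. -/
theorem sarah_residual_telescoping {d n : ℕ} (hn : 1 ≤ n)
    (F : Fin n → EuclideanSpace ℝ (Fin d) → EuclideanSpace ℝ (Fin d))
    (γ : ℝ) (hγ0 : 0 < γ)
    (K : ℕ) (hK : 1 ≤ K) (z0 : EuclideanSpace ℝ (Fin d)) :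
    (∑ j : Fin K → Fin n,
        ‖opAvg F (sarahTraj γ F z0 j K).1 - (sarahTraj γ F z0 j K).2‖ ^ 2) / (n : ℝ) ^ K
      ≤ ∑ k ∈ Finset.Icc 1 K,
          (∑ j : Fin K → Fin n,
            ‖(sarahTraj γ F z0 j k).2 - (sarahTraj γ F z0 j (k - 1)).2‖ ^ 2) / (n : ℝ) ^ K := by
  classical
  have hn0 : (0:ℝ) < n := by exact_mod_cast hn
  set A : ℕ → ℝ := fun k => ∑ j : Fin K → Fin n,
    ‖opAvg F (sarahTraj γ F z0 j k).1 - (sarahTraj γ F z0 j k).2‖ ^ 2 with hA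
  set B : ℕ → ℝ := fun k => ∑ j : Fin K → Fin n,
    ‖(sarahTraj γ F z0 j k).2 - (sarahTraj γ F z0 j (k - 1)).2‖ ^ 2 with hB
  have hA0 : A 0 = 0 := by
    simp [hA, sarahTraj, sarahRun]
  have hstep : ∀ k, k < K → A (k + 1) ≤ A k + B (k + 1) := by
    intro k hk
    set kh : Fin K := ⟨k, hk⟩ with hkh
    have htraj : ∀ j : Fin K → Fin n,
        sarahTraj γ F z0 j (k + 1) = sarahStep γ F (j kh) (sarahTraj γ F z0 j k) :=
      fun j => sarahTraj_succ γ F z0 j hk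
    set G1 : (Fin K → Fin n) → Fin n → ℝ := fun j i =>
      ‖opAvg F (sarahStep γ F i (sarahTraj γ F z0 j k)).1
        - (sarahStep γ F i (sarahTraj γ F z0 j k)).2‖ ^ 2 with hG1
    set G2 : (Fin K → Fin n) → Fin n → ℝ := fun j i =>
      ‖(sarahStep γ F i (sarahTraj γ F z0 j k)).2 - (sarahTraj γ F z0 j k).2‖ ^ 2 with hG2
    have hGinv1 : ∀ j a i, G1 (Function.update j kh a) i = G1 j i := by
      intro j a i; simp only [hG1, (by convert sarahTraj_update γ F z0 j kh a : sarahTraj γ F z0 (Function.update j kh a) k = sarahTraj γ F z0 j k)]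
    have hGinv2 : ∀ j a i, G2 (Function.update j kh a) i = G2 j i := by
      intro j a i; simp only [hG2, (by convert sarahTraj_update γ F z0 j kh a : sarahTraj γ F z0 (Function.update j kh a) k = sarahTraj γ F z0 j k)]
    have hg1 := sarah_sum_group kh G1 hGinv1
    have hg2 := sarah_sum_group kh G2 hGinv2
    simp only [Fintype.card_fin] at hg1 hg2
    have hA1 : A (k + 1) = ∑ j : Fin K → Fin n, G1 j (j kh) := by
      refine Finset.sum_congr rfl fun j _ => ?_
      rw [htraj j]
    have hB1 : B (k + 1) = ∑ j : Fin K → Fin n, G2 j (j kh) := by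
      refine Finset.sum_congr rfl fun j _ => ?_
      rw [Nat.add_sub_cancel, htraj j]
    have hbound : ∑ j : Fin K → Fin n, ∑ i, G1 j i
        ≤ (n : ℝ) * A k + ∑ j : Fin K → Fin n, ∑ i, G2 j i := by
      rw [hA, Finset.mul_sum, ← Finset.sum_add_distrib]
      exact Finset.sum_le_sum fun j _ =>
        sarah_step_bound hn γ F (sarahTraj γ F z0 j k)
    rw [hg1, hg2] at hbound
    rw [hA1, hB1]
    have := hbound
    nlinarith [this]
  have key : ∀ k, k ≤ K → A k ≤ ∑ m ∈ Finset.Icc 1 k, B m := by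
    intro k
    induction k with
    | zero => intro _; simp [hA0]
    | succ k ih =>
      intro hk1
      have hk : k < K := hk1
      have h1 := hstep k hk
      have h2 := ih (Nat.le_of_lt hk)
      rw [Finset.sum_Icc_succ_top (by omega : 1 ≤ k + 1)]
      linarith
  have hKfin := key K le_rfl
  have hpow : (0:ℝ) < (n : ℝ) ^ K := pow_pos hn0 K
  rw [← Finset.sum_div]
  exact (div_le_div_iff_of_pos_right hpow).mpr hKfin


end
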